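/- Let k, n be positive integers with 2k ≤ n, and let α₁, …, α_{2k} be distinct positive real numbers. If β, β′ ∈ ℝⁿ each have at most k nonzero entries and satisfy Σ_{j=0}^{n-1} β_j α_i^{j} = Σ_{j=0}^{n-1} β′_j α_i^{j} for every i ∈ {1,…,2k}, then β = β′. In other words, the 2k Vandermonde measurements at distinct positive points uniquely determine any k-sparse vector. -/
import Mathlib

open Polynomial

lemma deriv_support_card_lt {p : ℝ[X]} (h0 : p.coeff 0 ≠ 0) :
    p.derivative.support.card < p.support.card := by
  have hsub : p.derivative.support ⊆ (p.support.erase 0).image (· - 1) := by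
    intro m hm
    rw [Polynomial.mem_support_iff, Polynomial.coeff_derivative] at hm
    have hc : p.coeff (m + 1) ≠ 0 := fun h => hm (by simp [h])
    refine Finset.mem_image.2 ⟨m + 1, ?_, by omega⟩
    exact Finset.mem_erase.2 ⟨by omega, Polynomial.mem_support_iff.2 hc⟩
  calc p.derivative.support.card ≤ ((p.support.erase 0).image (· - 1)).card :=
        Finset.card_le_card hsub
    _ ≤ (p.support.erase 0).card := Finset.card_image_le
    _ < p.support.card :=
        Finset.card_erase_lt_of_mem (Polynomial.mem_support_iff.2 h0)

lemma pos_roots_lt_support_card : ∀ d : ℕ, ∀ p : ℝ[X], p.natDegree ≤ d → p ≠ 0 →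
    (p.roots.toFinset.filter (0 < ·)).card < p.support.card := by
  intro d
  induction d with
  | zero =>
    intro p hd hp
    have : p = C (p.coeff 0) := Polynomial.eq_C_of_natDegree_eq_zero (Nat.le_zero.1 hd)
    rw [this]
    have h0 : p.coeff 0 ≠ 0 := fun h => hp (by rw [this, h, map_zero])
    simp [Polynomial.roots_C, Polynomial.support_C h0]
  | succ d ih =>
    intro p hd hp
    by_cases h0 : p.coeff 0 = 0
    · -- p = X * q
      obtain ⟨q, hq⟩ := Polynomial.X_dvd_iff.2 h0
      have hq0 : q ≠ 0 := fun h => hp (by rw [hq, h, mul_zero])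
      have hdeg : q.natDegree ≤ d := by
        have := Polynomial.natDegree_X_mul hq0
        rw [← hq] at this; omega
      have hroots : p.roots.toFinset.filter (0 < ·) = q.roots.toFinset.filter (0 < ·) := by
        rw [hq, Polynomial.roots_mul (hq ▸ hp), Polynomial.roots_X, Multiset.toFinset_add]
        ext x
        simp only [Finset.mem_filter, Finset.mem_union, Multiset.toFinset_singleton,
          Finset.mem_singleton]
        constructor
        · rintro ⟨h1 | h1, h2⟩
          · exact absurd h2 (by simp [h1])
          · exact ⟨h1, h2⟩
        · rintro ⟨h1, h2⟩; exact ⟨Or.inr h1, h2⟩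
      have hsupp : p.support.card = q.support.card := by
        have : p.support = q.support.image (· + 1) := by
          ext m
          simp only [Polynomial.mem_support_iff, Finset.mem_image]
          constructor
          · intro hm
            cases m with
            | zero => exact absurd h0 hm
            | succ l => exact ⟨l, by rw [hq, Polynomial.coeff_X_mul] at hm; exact hm, rfl⟩
          · rintro ⟨l, hl, rfl⟩
            rw [hq, Polynomial.coeff_X_mul]; exact hl
        rw [this, Finset.card_image_of_injective _ (add_left_injective 1)]
      rw [hroots, hsupp]
      exact ih q hdeg hq0
    · -- coeff 0 ≠ 0; use Rolle on derivative
      rcases eq_or_ne p.derivative 0 with hd' | hd'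
      · have : p = C (p.coeff 0) := by
          rw [Polynomial.eq_C_of_derivative_eq_zero hd']; simp
        rw [this]
        simp [Polynomial.roots_C, Polynomial.support_C h0]
      · have hnd : p.natDegree ≠ 0 := by
          intro h
          exact hd' (by rw [Polynomial.eq_C_of_natDegree_eq_zero h]; simp)
        have hdlt : p.derivative.natDegree ≤ d := by
          have := Polynomial.natDegree_derivative_lt hnd
          omega
        have hS : (p.roots.toFinset.filter (0 < ·)).card ≤
            (p.derivative.roots.toFinset.filter (0 < ·)).card + 1 := by
          refine le_trans (Finset.card_le_diff_of_interleaved fun x hx y hy hxy hxy' => ?_)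
            (by gcongr; exact Finset.sdiff_subset)
          simp only [Finset.mem_filter, Multiset.mem_toFinset, Polynomial.mem_roots hp] at hx hy
          obtain ⟨z, hz1, hz2⟩ := exists_deriv_eq_zero hxy p.continuousOn (hx.1.trans hy.1.symm)
          refine ⟨z, ?_, hz1⟩
          simp only [Finset.mem_filter, Multiset.mem_toFinset, Polynomial.mem_roots hd']
          exact ⟨by rwa [Polynomial.IsRoot, ← p.deriv], lt_trans hx.2 hz1.1⟩
        have h1 := ih p.derivative hdlt hd'
        have h2 := deriv_support_card_lt h0
        omega

theorem sparse_recovery_vandermonde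
    (k n : ℕ) (hk : 0 < k) (hn : 0 < n) (h2k : 2 * k ≤ n)
    (α : Fin (2 * k) → ℝ) (hpos : ∀ i, 0 < α i) (hinj : Function.Injective α)
    (β β' : Fin n → ℝ)
    (hβ : (Finset.univ.filter fun j => β j ≠ 0).card ≤ k)
    (hβ' : (Finset.univ.filter fun j => β' j ≠ 0).card ≤ k)
    (hmeas : ∀ i : Fin (2 * k),
      ∑ j : Fin n, β j * α i ^ (j : ℕ) = ∑ j : Fin n, β' j * α i ^ (j : ℕ)) :
    β = β' := by
  by_contra hne
  set p : ℝ[X] := ∑ j : Fin n, C (β j - β' j) * X ^ (j : ℕ) with hp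
  have hcoeff : ∀ j : Fin n, p.coeff (j : ℕ) = β j - β' j := by
    intro j
    rw [hp, Polynomial.finset_sum_coeff]
    rw [Finset.sum_eq_single j]
    · rw [Polynomial.coeff_C_mul, Polynomial.coeff_X_pow, if_pos rfl, mul_one]
    · intro b _ hb
      have hne : (b : ℕ) ≠ (j : ℕ) := fun h => hb (Fin.ext h)
      rw [Polynomial.coeff_C_mul, Polynomial.coeff_X_pow]
      simp [hne, hne.symm]
    · simp
  have hpne : p ≠ 0 := by
    obtain ⟨j, hj⟩ := Function.ne_iff.1 hne
    intro h
    have := hcoeff j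
    rw [h] at this
    exact hj (by simpa [sub_eq_zero] using this.symm)
  have hsupp : p.support.card ≤ 2 * k := by
    have hsub : p.support ⊆ Finset.image Fin.val
        ((Finset.univ.filter fun j => β j ≠ 0) ∪ (Finset.univ.filter fun j => β' j ≠ 0)) := by
      intro m hm
      rw [Polynomial.mem_support_iff, hp, Polynomial.finset_sum_coeff] at hm
      obtain ⟨j, -, hj⟩ := Finset.exists_ne_zero_of_sum_ne_zero hm
      rw [Polynomial.coeff_C_mul, Polynomial.coeff_X_pow] at hj
      by_cases hjm : m = (j : ℕ)
      case neg => rw [if_neg hjm, mul_zero] at hj; exact absurd rfl hj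
      rw [if_pos hjm, mul_one] at hj
      have : β j - β' j ≠ 0 := hj
      refine Finset.mem_image.2 ⟨j, ?_, hjm.symm⟩
      simp only [Finset.mem_union, Finset.mem_filter, Finset.mem_univ, true_and]
      by_contra hc
      push_neg at hc
      rw [hc.1, hc.2, sub_zero] at this
      exact this rfl
    calc p.support.card ≤ _ := Finset.card_le_card hsub
      _ ≤ _ := Finset.card_image_le
      _ ≤ _ := Finset.card_union_le _ _
      _ ≤ 2 * k := by omega
  have hroot : ∀ i : Fin (2 * k), p.eval (α i) = 0 := by
    intro i
    rw [hp]
    simp only [Polynomial.eval_finset_sum, Polynomial.eval_mul, Polynomial.eval_C,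
      Polynomial.eval_pow, Polynomial.eval_X]
    have := hmeas i
    simp only [sub_mul]
    rw [Finset.sum_sub_distrib, this, sub_self]
  have himg : Finset.image α Finset.univ ⊆ p.roots.toFinset.filter (0 < ·) := by
    intro x hx
    obtain ⟨i, -, rfl⟩ := Finset.mem_image.1 hx
    simp only [Finset.mem_filter, Multiset.mem_toFinset, Polynomial.mem_roots hpne]
    exact ⟨hroot i, hpos i⟩
  have hge : 2 * k ≤ (p.roots.toFinset.filter (0 < ·)).card := by
    calc 2 * k = (Finset.image α Finset.univ).card := by
          rw [Finset.card_image_of_injective _ hinj, Finset.card_univ, Fintype.card_fin]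
      _ ≤ _ := Finset.card_le_card himg
  have := pos_roots_lt_support_card p.natDegree p le_rfl hpne
  omega
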